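/- arXiv:1012.2593 — 8 statements merged into one kernel-verified Lean document; each statement's English description precedes it below -/
import Mathlib

section
/- Let p be a polynomial with complex coefficients of degree at least 2, and let Σ' be a finite set of complex numbers such that every z ∈ ℂ with p(z) ∈ Σ' and z ∉ Σ' satisfies p'(z) = 0 (i.e. the preimage p⁻¹(Σ') is contained in Σ' together with critical points of p). Then Σ' has at most 2 elements. -/
/-- Polynomial case of the exceptional-set lemma: if `S` is a finite set of complex
numbers such that every preimage of `S` under a polynomial `p` of degree at least `2`
either lies in `S` or is a critical point of `p`, then `S` has at most two elements. -/
theorem polynomial_exceptional_set_card_le_two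
    (p : Polynomial ℂ) (hdeg : 2 ≤ p.natDegree) (S : Finset ℂ)
    (hinv : ∀ z : ℂ, p.eval z ∈ S → z ∉ S → p.derivative.eval z = 0) :
    S.card ≤ 2 := by
  classical
  set d := p.natDegree with hd
  have hp0 : p ≠ 0 := by
    intro h; rw [h] at hd; simp [hd] at hdeg
  have hder : p.derivative ≠ 0 := by
    intro h
    have := Polynomial.natDegree_eq_zero_of_derivative_eq_zero h
    omega
  have hderdeg : p.derivative.natDegree ≤ d - 1 := by
    have := Polynomial.natDegree_derivative_lt (p := p) (by omega)
    omega
  have hdercard : Multiset.card p.derivative.roots ≤ d - 1 :=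
    le_trans (Polynomial.card_roots' _) hderdeg
  have hfac : ∀ s : ℂ, p - Polynomial.C s ≠ 0 := by
    intro s h
    have h2 : (p - Polynomial.C s).natDegree = d := Polynomial.natDegree_sub_C
    rw [h] at h2
    simp at h2
    omega
  set P : Polynomial ℂ := ∏ s ∈ S, (p - Polynomial.C s) with hPdef
  have hP0 : P ≠ 0 := Finset.prod_ne_zero_iff.mpr fun s _ => hfac s
  have hroots : P.roots = S.val.bind fun s => (p - Polynomial.C s).roots :=
    Polynomial.roots_prod _ _ hP0
  have hfibcard : ∀ s : ℂ, Multiset.card ((p - Polynomial.C s).roots) = d := by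
    intro s
    have := (Polynomial.splits_iff_card_roots).mp
      (IsAlgClosed.splits (k := ℂ) (p - Polynomial.C s))
    rwa [Polynomial.natDegree_sub_C] at this
  have hcardP : Multiset.card P.roots = S.card * d := by
    rw [hroots, Multiset.card_bind]
    simp only [Function.comp_def]
    have : (S.val.map fun s => Multiset.card ((p - Polynomial.C s).roots))
        = S.val.map fun _ => d := Multiset.map_congr rfl fun s _ => hfibcard s
    rw [this, Multiset.map_const', Multiset.sum_replicate, smul_eq_mul]
    rfl
  set F : Finset ℂ := P.roots.toFinset with hF
  -- each root of P evaluates into S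
  have hevalS : ∀ z ∈ F, p.eval z ∈ S := by
    intro z hz
    rw [hF, Multiset.mem_toFinset, hroots] at hz
    obtain ⟨s, hs, hroot⟩ := Multiset.mem_bind.mp hz
    have hev : p.eval z = s := by
      have := Polynomial.isRoot_of_mem_roots hroot
      simpa [Polynomial.IsRoot, sub_eq_zero] using this
    rwa [hev]
  -- multiplicity bound per root
  have hcount : ∀ z ∈ F, P.roots.count z ≤ p.derivative.roots.count z + 1 := by
    intro z hz
    have hzS := hevalS z hz
    set s := p.eval z with hs
    have hcnt : P.roots.count z = (p - Polynomial.C s).rootMultiplicity z := by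
      rw [hroots, Multiset.count_bind]
      have hsum : (S.val.map fun t => ((p - Polynomial.C t).roots).count z).sum
          = ∑ t ∈ S, ((p - Polynomial.C t).roots).count z := rfl
      rw [hsum, Finset.sum_eq_single_of_mem s hzS, Polynomial.count_roots]
      intro t _ hts
      rw [Polynomial.count_roots, Polynomial.rootMultiplicity_eq_zero]
      intro hc
      have : p.eval z = t := by simpa [Polynomial.IsRoot, sub_eq_zero] using hc
      exact hts this.symm
    have hml : (p - Polynomial.C s).rootMultiplicity z - 1
        ≤ p.derivative.rootMultiplicity z := by
      have := Polynomial.rootMultiplicity_sub_one_le_derivative_rootMultiplicity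
        (p - Polynomial.C s) z
      simpa using this
    rw [hcnt, Polynomial.count_roots]
    omega
  -- lower bound: S.card * d ≤ (d-1) + F.card
  have hlow : S.card * d ≤ (d - 1) + F.card := by
    have h1 : Multiset.card P.roots = ∑ z ∈ F, P.roots.count z :=
      (Multiset.toFinset_sum_count_eq _).symm
    have h2 : ∑ z ∈ F, P.roots.count z
        ≤ ∑ z ∈ F, (p.derivative.roots.count z + 1) :=
      Finset.sum_le_sum hcount
    have h3 : ∑ z ∈ F, (p.derivative.roots.count z + 1)
        = (∑ z ∈ F, p.derivative.roots.count z) + F.card := by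
      rw [Finset.sum_add_distrib, Finset.sum_const, smul_eq_mul, mul_one]
    have h4 : ∑ z ∈ F, p.derivative.roots.count z
        ≤ Multiset.card p.derivative.roots := by
      calc ∑ z ∈ F, p.derivative.roots.count z
          ≤ ∑ z ∈ p.derivative.roots.toFinset, p.derivative.roots.count z := by
            apply Finset.sum_le_sum_of_ne_zero
            intro z _ hz
            rw [Multiset.mem_toFinset]
            exact Multiset.count_pos.mp (Nat.pos_of_ne_zero hz)
        _ = Multiset.card p.derivative.roots := Multiset.toFinset_sum_count_eq _
    omega
  -- upper bound: F.card ≤ S.card + (d-1)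
  have hup : F.card ≤ S.card + (d - 1) := by
    have hsub : F ⊆ S ∪ p.derivative.roots.toFinset := by
      intro z hz
      by_cases hzS : z ∈ S
      · exact Finset.mem_union_left _ hzS
      · refine Finset.mem_union_right _ ?_
        rw [Multiset.mem_toFinset, Polynomial.mem_roots hder]
        exact hinv z (hevalS z hz) hzS
    calc F.card ≤ (S ∪ p.derivative.roots.toFinset).card := Finset.card_le_card hsub
      _ ≤ S.card + p.derivative.roots.toFinset.card := Finset.card_union_le _ _
      _ ≤ S.card + (d - 1) := by
          have := Multiset.toFinset_card_le p.derivative.roots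
          omega
  -- arithmetic: S.card * d ≤ S.card + 2*(d-1) ⟹ S.card ≤ 2
  have hkey : S.card * d ≤ S.card + 2 * (d - 1) := by omega
  obtain ⟨e, he⟩ : ∃ e, d = e + 1 := ⟨d - 1, by omega⟩
  have hsplit : S.card * d = S.card * (d - 1) + S.card := by
    rw [he, Nat.add_sub_cancel, Nat.mul_succ]
  have h5 : S.card * (d - 1) ≤ 2 * (d - 1) := by omega
  exact Nat.le_of_mul_le_mul_right h5 (by omega)
end

section
/- Let X be a metric space, C a natural number, and S : ℕ → Finset X a sequence of finite subsets of X with (S n).card ≤ C for every n. Then the set of points z ∈ X such that either z ∈ S n for some n, or there exists β ∈ (0,1) such that for every N there exist n ≥ N and y ∈ S n with dist(z, y) ≤ β^n, has Hausdorff dimension 0. -/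
open MeasureTheory Filter Set EMetric
open scoped ENNReal NNReal Topology

/-- The natural equivalence between `ℕ` and naturals `≥ N`, by adding `N`. -/
def natShiftEquiv (N : ℕ) : ℕ ≃ {m : ℕ // N ≤ m} where
  toFun k := ⟨k + N, Nat.le_add_left _ _⟩
  invFun m := (m : ℕ) - N
  left_inv k := by simp
  right_inv m := by ext; simp [Nat.sub_add_cancel m.2]

/-- For a fixed `β ∈ (0,1)`, the limsup set has Hausdorff measure zero in every
positive dimension. -/
lemma hausdorffMeasure_limsup_eq_zero
    {X : Type*} [MetricSpace X] [MeasurableSpace X] [BorelSpace X] (C : ℕ) (S : ℕ → Finset X)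
    (hcard : ∀ n, (S n).card ≤ C) {β : ℝ} (hβ0 : 0 < β) (hβ1 : β < 1)
    {d : ℝ} (hd : 0 < d) :
    μH[d] {z : X | ∀ N : ℕ, ∃ n, N ≤ n ∧ ∃ y ∈ S n, dist z y ≤ β ^ n} = 0 := by
  set A := {z : X | ∀ N : ℕ, ∃ n, N ≤ n ∧ ∃ y ∈ S n, dist z y ≤ β ^ n}
  set a : ℕ → ℝ≥0∞ := fun n => ENNReal.ofReal ((2 * β ^ n) ^ d) with ha_def
  -- the geometric series `a` is summable
  have ha_eq : ∀ n, a n = ENNReal.ofReal (2 ^ d) * ENNReal.ofReal (β ^ d) ^ n := by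
    intro n
    have h1 : (2 * β ^ n : ℝ) ^ d = 2 ^ d * (β ^ d) ^ n := by
      rw [Real.mul_rpow (by norm_num) (by positivity), ← Real.rpow_natCast_mul hβ0.le,
        mul_comm (n : ℝ) d, Real.rpow_mul hβ0.le, Real.rpow_natCast]
    rw [ha_def]
    simp only [h1]
    rw [ENNReal.ofReal_mul (by positivity), ENNReal.ofReal_pow (by positivity)]
  have hq1 : ENNReal.ofReal (β ^ d) < 1 := by
    rw [ENNReal.ofReal_lt_one]
    exact Real.rpow_lt_one hβ0.le hβ1 hd
  have ha_ne_top : ∑' n, a n ≠ ∞ := by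
    rw [tsum_congr ha_eq, ENNReal.tsum_mul_left, ENNReal.tsum_geometric]
    exact ENNReal.mul_ne_top ENNReal.ofReal_ne_top
      (ENNReal.inv_ne_top.2 (tsub_pos_of_lt hq1).ne')
  -- the covering sets
  set t : ∀ N : ℕ, (Σ n : {m : ℕ // N ≤ m}, {y : X // y ∈ S (n : ℕ)}) → Set X :=
    fun N i => EMetric.closedBall (i.2 : X) (ENNReal.ofReal (β ^ (i.1 : ℕ))) with ht_def
  have hcover : μH[d] A ≤
      liminf (fun N => ∑' i, diam (t N i) ^ d) atTop := by
    apply MeasureTheory.Measure.hausdorffMeasure_le_liminf_tsum d A (fun N => ENNReal.ofReal (2 * β ^ N))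
    · have h : Tendsto (fun N : ℕ => 2 * β ^ N) atTop (𝓝 (2 * 0)) :=
        (tendsto_pow_atTop_nhds_zero_of_lt_one hβ0.le hβ1).const_mul 2
      rw [mul_zero] at h
      have h2 := ENNReal.tendsto_ofReal h
      rwa [ENNReal.ofReal_zero] at h2
    · filter_upwards with N i
      refine le_trans diam_closedBall ?_
      have : (β : ℝ) ^ (i.1 : ℕ) ≤ β ^ N := pow_le_pow_of_le_one hβ0.le hβ1.le i.1.2
      calc 2 * ENNReal.ofReal (β ^ (i.1 : ℕ))
          ≤ 2 * ENNReal.ofReal (β ^ N) :=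
            mul_le_mul_right (ENNReal.ofReal_le_ofReal this) 2
        _ = ENNReal.ofReal (2 * β ^ N) := by
            rw [ENNReal.ofReal_mul (by norm_num), ENNReal.ofReal_ofNat]
    · filter_upwards with N
      intro z hz
      obtain ⟨n, hn, y, hy, hdist⟩ := hz N
      refine Set.mem_iUnion.2 ⟨⟨⟨n, hn⟩, ⟨y, hy⟩⟩, ?_⟩
      simp only [ht_def, EMetric.mem_closedBall, edist_dist]
      exact (edist_dist z y).le.trans (ENNReal.ofReal_le_ofReal hdist)
  -- bound the sums
  have hbound : ∀ N : ℕ, (∑' i, diam (t N i) ^ d) ≤ (C : ℝ≥0∞) * ∑' k, a (k + N) := by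
    intro N
    have h1 : (∑' i, diam (t N i) ^ d) ≤ ∑' i : (Σ n : {m : ℕ // N ≤ m}, {y : X // y ∈ S (n : ℕ)}), a (i.1 : ℕ) := by
      apply ENNReal.tsum_le_tsum
      intro i
      have hdiam : diam (t N i) ≤ ENNReal.ofReal (2 * β ^ (i.1 : ℕ)) := by
        refine le_trans diam_closedBall ?_
        rw [ENNReal.ofReal_mul (by norm_num), ENNReal.ofReal_ofNat]
      calc diam (t N i) ^ d ≤ ENNReal.ofReal (2 * β ^ (i.1 : ℕ)) ^ d :=
            ENNReal.rpow_le_rpow hdiam hd.le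
        _ = a (i.1 : ℕ) := by
            rw [ha_def, ENNReal.ofReal_rpow_of_pos (by positivity)]
    refine h1.trans ?_
    rw [ENNReal.tsum_sigma']
    have h2 : ∀ n : {m : ℕ // N ≤ m}, (∑' _ : {y : X // y ∈ S (n : ℕ)}, a (n : ℕ)) ≤ (C : ℝ≥0∞) * a (n : ℕ) := by
      intro n
      rw [tsum_fintype, Finset.sum_const, Finset.card_univ, Fintype.card_coe, nsmul_eq_mul]
      gcongr
      exact_mod_cast hcard _
    refine (ENNReal.tsum_le_tsum h2).trans ?_
    rw [ENNReal.tsum_mul_left]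
    gcongr
    -- reindex the subtype sum
    rw [← (natShiftEquiv N).tsum_eq]
    exact le_of_eq (tsum_congr fun k => rfl)
  -- conclude
  have htail : Tendsto (fun N => (C : ℝ≥0∞) * ∑' k, a (k + N)) atTop (𝓝 0) := by
    have := ENNReal.tendsto_sum_nat_add a ha_ne_top
    simpa using ENNReal.Tendsto.const_mul this (Or.inr (by simp : (C : ℝ≥0∞) ≠ ∞))
  have h0 : liminf (fun N => ∑' i, diam (t N i) ^ d) atTop = 0 := by
    refine le_antisymm ?_ zero_le
    calc liminf (fun N => ∑' i, diam (t N i) ^ d) atTop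
        ≤ liminf (fun N => (C : ℝ≥0∞) * ∑' k, a (k + N)) atTop :=
          liminf_le_liminf (Eventually.of_forall hbound)
      _ = 0 := htail.liminf_eq
  exact le_antisymm (h0 ▸ hcover) zero_le

lemma dimH_limsup_eq_zero
    {X : Type*} [MetricSpace X] (C : ℕ) (S : ℕ → Finset X)
    (hcard : ∀ n, (S n).card ≤ C) {β : ℝ} (hβ0 : 0 < β) (hβ1 : β < 1) :
    dimH {z : X | ∀ N : ℕ, ∃ n, N ≤ n ∧ ∃ y ∈ S n, dist z y ≤ β ^ n} = 0 := by
  refine le_antisymm ?_ zero_le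
  have key : ∀ d : ℝ≥0, 0 < d →
      dimH {z : X | ∀ N : ℕ, ∃ n, N ≤ n ∧ ∃ y ∈ S n, dist z y ≤ β ^ n} ≤ d := by
    intro d hd
    borelize X
    refine dimH_le_of_hausdorffMeasure_ne_top ?_
    rw [hausdorffMeasure_limsup_eq_zero C S hcard hβ0 hβ1 (by exact_mod_cast hd)]
    exact ENNReal.zero_ne_top
  refine ENNReal.le_of_forall_pos_le_add fun ε hε _ => ?_
  simpa using key ε hε

/-- The set of points that fail to be "safe" with respect to a sequence of finite sets
`S n` of uniformly bounded cardinality (i.e., points lying in some `S n`, or points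
within distance `β^n` of `S n` for infinitely many `n`, for some `β ∈ (0,1)`) has
Hausdorff dimension zero. -/
theorem dimH_not_safe_eq_zero
    {X : Type*} [MetricSpace X] (C : ℕ) (S : ℕ → Finset X)
    (hcard : ∀ n, (S n).card ≤ C) :
    dimH {z : X | (∃ n, z ∈ S n) ∨
      ∃ β ∈ Set.Ioo (0 : ℝ) 1, ∀ N : ℕ, ∃ n, N ≤ n ∧ ∃ y ∈ S n, dist z y ≤ β ^ n} = 0 := by
  refine le_antisymm ?_ zero_le
  set βk : ℕ → ℝ := fun k => 1 - ((k : ℝ) + 2)⁻¹ with hβk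
  have hβk0 : ∀ k, 0 < βk k := by
    intro k
    have h2 : ((k : ℝ) + 2)⁻¹ ≤ 2⁻¹ := by
      apply inv_anti₀ <;> norm_num [Nat.cast_nonneg]
    simp only [hβk, sub_pos]
    linarith
  have hβk1 : ∀ k, βk k < 1 := by
    intro k
    have : (0 : ℝ) < ((k : ℝ) + 2)⁻¹ := by positivity
    simp only [hβk, sub_lt_self_iff]; exact this
  have hsub : {z : X | (∃ n, z ∈ S n) ∨
      ∃ β ∈ Set.Ioo (0 : ℝ) 1, ∀ N : ℕ, ∃ n, N ≤ n ∧ ∃ y ∈ S n, dist z y ≤ β ^ n} ⊆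
      (⋃ n, (S n : Set X)) ∪
      ⋃ k : ℕ, {z : X | ∀ N : ℕ, ∃ n, N ≤ n ∧ ∃ y ∈ S n, dist z y ≤ (βk k) ^ n} := by
    rintro z (⟨n, hn⟩ | ⟨β, ⟨hβ0, hβ1⟩, hz⟩)
    · exact Or.inl (Set.mem_iUnion.2 ⟨n, hn⟩)
    · right
      -- choose k with β ≤ βk k, i.e. (k+2)⁻¹ ≤ 1 - β
      obtain ⟨k, hk⟩ := exists_nat_gt (1 - β)⁻¹
      refine Set.mem_iUnion.2 ⟨k, fun N => ?_⟩
      obtain ⟨n, hn, y, hy, hd⟩ := hz N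
      refine ⟨n, hn, y, hy, hd.trans ?_⟩
      have hβle : β ≤ βk k := by
        have h1β : (0 : ℝ) < 1 - β := by linarith
        have : ((k : ℝ) + 2)⁻¹ ≤ 1 - β := by
          rw [inv_le_comm₀ (by positivity) h1β]
          linarith
        simp only [hβk]; linarith
      exact pow_le_pow_left₀ hβ0.le hβle n
  refine (dimH_mono hsub).trans ?_
  rw [dimH_union]
  apply max_le
  · rw [dimH_iUnion]
    refine iSup_le fun n => le_of_eq ?_
    exact Set.Countable.dimH_zero (Finset.countable_toSet _)
  · rw [dimH_iUnion]
    exact iSup_le fun k => le_of_eq (dimH_limsup_eq_zero C S hcard (hβk0 k) (hβk1 k))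
end

section
/- Let f : ℂ → ℂ be analytic at a point c ∈ ℂ, and suppose the function z ↦ f(z) − f(c) vanishes at c to finite order d with 1 ≤ d (i.e. its order of vanishing as an analytic germ at c equals d). Then there exist r > 0 and C ≥ 1 such that for every z with dist(z, c) < r: C⁻¹·dist(z,c)^d ≤ dist(f(z), f(c)) ≤ C·dist(z,c)^d, and C⁻¹·dist(z,c)^{d−1} ≤ ‖deriv f z‖ ≤ C·dist(z,c)^{d−1}. -/
/-- Local-degree asymptotics: if `f` is analytic at `c` and `z ↦ f z - f c` vanishes at
`c` to finite order `d ≥ 1`, then near `c` one has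
`dist (f z) (f c) ∼ dist z c ^ d` and `‖deriv f z‖ ∼ dist z c ^ (d-1)`,
up to a multiplicative constant. -/
theorem local_degree_asymptotics
    (f : ℂ → ℂ) (c : ℂ) (hf : AnalyticAt ℂ f c) (d : ℕ) (hd : 1 ≤ d)
    (hA : AnalyticAt ℂ (fun z => f z - f c) c) (hord : analyticOrderAt (fun z => f z - f c) c = (d : ℕ∞)) :
    ∃ r > 0, ∃ C : ℝ, 1 ≤ C ∧ ∀ z : ℂ, dist z c < r →
      (C⁻¹ * dist z c ^ d ≤ dist (f z) (f c) ∧ dist (f z) (f c) ≤ C * dist z c ^ d) ∧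
      (C⁻¹ * dist z c ^ (d - 1) ≤ ‖deriv f z‖ ∧ ‖deriv f z‖ ≤ C * dist z c ^ (d - 1)) := by
  obtain ⟨g, hg, hgc, hfg⟩ := (hA.analyticOrderAt_eq_natCast (n := d)).mp hord
  have hfg' : ∀ᶠ z in nhds c, f z - f c = (z - c) ^ d * g z :=
    hfg.mono fun z hz => by simpa [smul_eq_mul] using hz
  set a := ‖g c‖ with ha_def
  have ha : 0 < a := norm_pos_iff.mpr hgc
  have hdg : AnalyticAt ℂ (deriv g) c := by
    obtain ⟨s, hsn, hs⟩ := hg.exists_mem_nhds_analyticOnNhd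
    exact hs.deriv c (mem_of_mem_nhds hsn)
  set h : ℂ → ℂ := fun z => (d : ℂ) * g z + (z - c) * deriv g z with hh_def
  have hh : AnalyticAt ℂ h c :=
    (analyticAt_const.mul hg).add ((analyticAt_id.sub analyticAt_const).mul hdg)
  set b := ‖h c‖ with hb_def
  have hb : 0 < b := by
    have hc0 : h c = (d : ℂ) * g c := by simp [hh_def]
    rw [hb_def, hc0, norm_mul]
    have : ‖(d : ℂ)‖ = (d : ℝ) := by simp
    rw [this]
    have : (0 : ℝ) < (d : ℝ) := by exact_mod_cast hd
    positivity
  -- eventual conditions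
  have e1 : ∀ᶠ z in nhds c, ∀ᶠ w in nhds z, f w - f c = (w - c) ^ d * g w :=
    hfg'.eventually_nhds
  have e2 : ∀ᶠ z in nhds c, AnalyticAt ℂ g z := hg.eventually_analyticAt
  have e3 : ∀ᶠ z in nhds c, a / 2 ≤ ‖g z‖ ∧ ‖g z‖ ≤ 2 * a := by
    have hcont : ContinuousAt (fun z => ‖g z‖) c := hg.continuousAt.norm
    have hmem : Set.Ioo (a / 2) (2 * a) ∈ nhds ‖g c‖ :=
      Ioo_mem_nhds (by linarith) (by linarith)
    have hev : ∀ᶠ z in nhds c, ‖g z‖ ∈ Set.Ioo (a / 2) (2 * a) := hcont hmem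
    exact hev.mono fun z hz => ⟨hz.1.le, hz.2.le⟩
  have e4 : ∀ᶠ z in nhds c, b / 2 ≤ ‖h z‖ ∧ ‖h z‖ ≤ 2 * b := by
    have hcont : ContinuousAt (fun z => ‖h z‖) c := hh.continuousAt.norm
    have hmem : Set.Ioo (b / 2) (2 * b) ∈ nhds ‖h c‖ :=
      Ioo_mem_nhds (by linarith) (by linarith)
    have hev : ∀ᶠ z in nhds c, ‖h z‖ ∈ Set.Ioo (b / 2) (2 * b) := hcont hmem
    exact hev.mono fun z hz => ⟨hz.1.le, hz.2.le⟩
  obtain ⟨r, hr, hball⟩ := Metric.eventually_nhds_iff.mp ((e1.and e2).and (e3.and e4))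
  set C : ℝ := max 1 (max (max (2 * a) (2 / a)) (max (2 * b) (2 / b))) with hC_def
  have hC1 : (1 : ℝ) ≤ C := le_max_left _ _
  have hC0 : 0 < C := lt_of_lt_of_le one_pos hC1
  have hCa : 2 * a ≤ C := le_trans (le_max_left _ _) (le_trans (le_max_left _ _) (le_max_right _ _))
  have hCa' : 2 / a ≤ C := le_trans (le_max_right _ _) (le_trans (le_max_left _ _) (le_max_right _ _))
  have hCb : 2 * b ≤ C := le_trans (le_max_left _ _) (le_trans (le_max_right _ _) (le_max_right _ _))
  have hCb' : 2 / b ≤ C := le_trans (le_max_right _ _) (le_trans (le_max_right _ _) (le_max_right _ _))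
  have hCainv : C⁻¹ ≤ a / 2 := by
    have := inv_anti₀ (div_pos two_pos ha) hCa'
    rwa [inv_div] at this
  have hCbinv : C⁻¹ ≤ b / 2 := by
    have := inv_anti₀ (div_pos two_pos hb) hCb'
    rwa [inv_div] at this
  refine ⟨r, hr, C, hC1, fun z hz => ?_⟩
  obtain ⟨⟨H1, Hg⟩, ⟨hg1, hg2⟩, ⟨hh1, hh2⟩⟩ := hball hz
  -- formulas
  have hnf : dist (f z) (f c) = dist z c ^ d * ‖g z‖ := by
    rw [dist_eq_norm, H1.self_of_nhds, norm_mul, norm_pow, ← dist_eq_norm]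
  have hderiv : deriv f z = (z - c) ^ (d - 1) * h z := by
    have hfe : f =ᶠ[nhds z] fun w => (w - c) ^ d * g w + f c :=
      H1.mono fun w hw => eq_add_of_sub_eq hw
    rw [hfe.deriv_eq]
    have hgz : HasDerivAt g (deriv g z) z := Hg.differentiableAt.hasDerivAt
    have hpow : HasDerivAt (fun w => (w - c) ^ d) ((d : ℂ) * (z - c) ^ (d - 1)) z := by
      simpa using ((hasDerivAt_id z).sub_const c).fun_pow d
    have hall := (hpow.fun_mul hgz).add_const (f c)
    rw [hall.deriv]
    have hsplit : (z - c) ^ d = (z - c) ^ (d - 1) * (z - c) := by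
      rw [← pow_succ]; congr 1; omega
    rw [hsplit, hh_def]; ring
  have hnd : ‖deriv f z‖ = dist z c ^ (d - 1) * ‖h z‖ := by
    rw [hderiv, norm_mul, norm_pow, ← dist_eq_norm]
  have hD : 0 ≤ dist z c := dist_nonneg
  have hDd : 0 ≤ dist z c ^ d := pow_nonneg hD d
  have hDd1 : 0 ≤ dist z c ^ (d - 1) := pow_nonneg hD _
  refine ⟨⟨?_, ?_⟩, ?_, ?_⟩
  · rw [hnf]
    calc C⁻¹ * dist z c ^ d ≤ (a / 2) * dist z c ^ d :=
          mul_le_mul_of_nonneg_right hCainv hDd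
      _ ≤ ‖g z‖ * dist z c ^ d := mul_le_mul_of_nonneg_right hg1 hDd
      _ = dist z c ^ d * ‖g z‖ := mul_comm _ _
  · rw [hnf]
    calc dist z c ^ d * ‖g z‖ ≤ dist z c ^ d * (2 * a) :=
          mul_le_mul_of_nonneg_left hg2 hDd
      _ ≤ C * dist z c ^ d := by rw [mul_comm]; exact mul_le_mul_of_nonneg_right hCa hDd
  · rw [hnd]
    calc C⁻¹ * dist z c ^ (d - 1) ≤ (b / 2) * dist z c ^ (d - 1) :=
          mul_le_mul_of_nonneg_right hCbinv hDd1
      _ ≤ ‖h z‖ * dist z c ^ (d - 1) := mul_le_mul_of_nonneg_right hh1 hDd1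
      _ = dist z c ^ (d - 1) * ‖h z‖ := mul_comm _ _
  · rw [hnd]
    calc dist z c ^ (d - 1) * ‖h z‖ ≤ dist z c ^ (d - 1) * (2 * b) :=
          mul_le_mul_of_nonneg_left hh2 hDd1
      _ ≤ C * dist z c ^ (d - 1) := by
          rw [mul_comm]; exact mul_le_mul_of_nonneg_right hCb hDd1
end

section
/- Let g : ℂ → ℂ be entire, let p ∈ ℂ satisfy g(p) = p, and suppose λ := ‖deriv g p‖ > 1. Then for every σ with 1 < σ < λ there exists δ > 0 such that for every x ∈ ℂ and every integer m ≥ 1, if g^[j](x) ∈ closedBall(p, δ) for every j < m, then dist(x, p) ≤ δ·σ^{−(m−1)} and ‖deriv (g^[m]) x‖ ≥ σ^m. -/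
/-- Basic estimate for orbits of an entire map staying near a repelling fixed point:
for `1 < σ < λ = ‖deriv g p‖` there is `δ > 0` such that if the first `m` points of the
orbit of `x` stay in the closed `δ`-ball around `p`, then `dist x p ≤ δ·σ^{-(m-1)}` and
`‖deriv (g^[m]) x‖ ≥ σ^m`. -/
theorem repelling_fixed_point_orbit_estimate
    (g : ℂ → ℂ) (hg : Differentiable ℂ g) (p : ℂ) (hfix : g p = p)
    (hrep : 1 < ‖deriv g p‖) :
    ∀ σ : ℝ, 1 < σ → σ < ‖deriv g p‖ →
      ∃ δ > 0, ∀ x : ℂ, ∀ m : ℕ, 1 ≤ m →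
        (∀ j < m, g^[j] x ∈ Metric.closedBall p δ) →
        dist x p ≤ δ * σ ^ (-((m : ℤ) - 1)) ∧ σ ^ m ≤ ‖deriv (g^[m]) x‖ := by
  intro σ hσ1 hslt
  have hσ0 : 0 < σ := lt_trans one_pos hσ1
  -- continuity of the derivative
  have hcd : Continuous (deriv g) := (hg.contDiff : ContDiff ℂ 2 g).continuous_deriv one_le_two
  have h1 : ∀ᶠ y in nhds p, σ < ‖deriv g y‖ :=
    (hcd.norm.continuousAt).eventually (eventually_gt_nhds hslt)
  obtain ⟨ε₁, hε₁, hball₁⟩ := Metric.eventually_nhds_iff.mp h1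
  -- derivative at p via slope
  have hslope : Filter.Tendsto (fun y => ‖slope g p y‖) (nhdsWithin p {p}ᶜ)
      (nhds ‖deriv g p‖) :=
    ((hasDerivAt_iff_tendsto_slope.mp (hg p).hasDerivAt).norm)
  have h2 : ∀ᶠ y in nhdsWithin p {p}ᶜ, σ < ‖slope g p y‖ :=
    hslope.eventually (eventually_gt_nhds hslt)
  obtain ⟨ε₂, hε₂, hball₂⟩ := Metric.eventually_nhds_iff.mp (eventually_nhdsWithin_iff.mp h2)
  set δ : ℝ := min (ε₁ / 2) (ε₂ / 2) with hδdef
  have hδpos : 0 < δ := lt_min (by linarith) (by linarith)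
  refine ⟨δ, hδpos, ?_⟩
  -- key pointwise facts
  have hder : ∀ y : ℂ, y ∈ Metric.closedBall p δ → σ ≤ ‖deriv g y‖ := by
    intro y hy
    have : dist y p < ε₁ := lt_of_le_of_lt (Metric.mem_closedBall.mp hy)
      (lt_of_le_of_lt (min_le_left _ _) (by linarith))
    exact le_of_lt (hball₁ this)
  have hexp : ∀ y : ℂ, y ∈ Metric.closedBall p δ → σ * dist y p ≤ dist (g y) p := by
    intro y hy
    rcases eq_or_ne y p with rfl | hne
    · simp [hfix]
    · have hd : dist y p < ε₂ := lt_of_le_of_lt (Metric.mem_closedBall.mp hy)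
        (lt_of_le_of_lt (min_le_right _ _) (by linarith))
      have hs : σ < ‖slope g p y‖ := hball₂ hd (by simpa using hne)
      have hyp : g y - p = slope g p y * (y - p) := by
        rw [slope_def_field, hfix, div_mul_cancel₀ _ (sub_ne_zero.mpr hne)]
      calc σ * dist y p ≤ ‖slope g p y‖ * dist y p := by
            exact mul_le_mul_of_nonneg_right (le_of_lt hs) dist_nonneg
        _ = dist (g y) p := by
            rw [dist_eq_norm, dist_eq_norm, hyp, norm_mul]
  intro x m hm horb
  -- Claim A: expansion of distance
  have claimA : ∀ k : ℕ, (∀ j < k, g^[j] x ∈ Metric.closedBall p δ) →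
      σ ^ k * dist x p ≤ dist (g^[k] x) p := by
    intro k
    induction k with
    | zero => intro _; simp
    | succ k ih =>
      intro h
      have hk : g^[k] x ∈ Metric.closedBall p δ := h k (Nat.lt_succ_self k)
      have ihk := ih (fun j hj => h j (hj.trans (Nat.lt_succ_self k)))
      have := hexp _ hk
      rw [Function.iterate_succ_apply']
      calc σ ^ (k + 1) * dist x p = σ * (σ ^ k * dist x p) := by ring
        _ ≤ σ * dist (g^[k] x) p := by nlinarith
        _ ≤ dist (g (g^[k] x)) p := this
  -- Claim B: derivative of iterate
  have claimB : ∀ k : ℕ, ∀ y : ℂ, (∀ j < k, g^[j] y ∈ Metric.closedBall p δ) →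
      σ ^ k ≤ ‖deriv (g^[k]) y‖ := by
    intro k
    induction k with
    | zero => intro y _; simp
    | succ k ih =>
      intro y h
      have hdit : DifferentiableAt ℂ (g^[k]) y := (hg.iterate k) y
      have hcomp : deriv (g^[k + 1]) y = deriv g (g^[k] y) * deriv (g^[k]) y := by
        have : g^[k + 1] = g ∘ g^[k] := Function.iterate_succ' g k
        rw [this, deriv_comp y (hg (g^[k] y)) hdit]
      rw [hcomp, norm_mul]
      have h1 := hder _ (h k (Nat.lt_succ_self k))
      have h2 := ih y (fun j hj => h j (hj.trans (Nat.lt_succ_self k)))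
      calc σ ^ (k + 1) = σ * σ ^ k := by ring
        _ ≤ ‖deriv g (g^[k] y)‖ * ‖deriv (g^[k]) y‖ := by
            apply mul_le_mul h1 h2 (by positivity)
              (le_trans (le_of_lt hσ0) h1)
  refine ⟨?_, claimB m x horb⟩
  -- distance bound
  obtain ⟨n, rfl⟩ : ∃ n, m = n + 1 := ⟨m - 1, (Nat.succ_pred_eq_of_pos hm).symm⟩
  have hA := claimA n (fun j hj => horb j (hj.trans (Nat.lt_succ_self n)))
  have hmem : g^[n] x ∈ Metric.closedBall p δ := horb n (Nat.lt_succ_self n)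
  have hle : σ ^ n * dist x p ≤ δ := hA.trans (Metric.mem_closedBall.mp hmem)
  have hz : (σ : ℝ) ^ (-(((n : ℕ) + 1 : ℤ) - 1)) = (σ ^ n)⁻¹ := by
    rw [show -(((n : ℕ) + 1 : ℤ) - 1) = -(n : ℤ) by ring, zpow_neg, zpow_natCast]
  have : dist x p ≤ δ * (σ ^ n)⁻¹ := by
    rw [← div_eq_mul_inv, le_div_iff₀ (pow_pos hσ0 n), mul_comm]
    exact hle
  calc dist x p ≤ δ * (σ ^ n)⁻¹ := this
    _ = δ * σ ^ (-(((n : ℕ) + 1 : ℤ) - 1)) := by rw [hz]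
    _ = δ * σ ^ (-(((n + 1 : ℕ) : ℤ) - 1)) := by push_cast; ring_nf
end

section
/- Let a : ℕ → ℝ and define S(m) = ∑_{j < m} a(j). Let χ ∈ ℝ, ε > 0, t ∈ (0,1), and let n ≥ 1 be an integer such that S(n) ≥ n·(χ − t·ε) and S(m) ≤ m·(χ + t·ε) for every integer m with 1 ≤ m < n. Then there exists an integer n' with 1 ≤ n' ≤ n and (n' : ℝ) ≥ n·(1−t)/(1+t) such that S(n') − S(m) ≥ (n' − m)·(χ − ε) for every integer m < n'. -/
/-- Pliss hyperbolic times: if the Birkhoff sum `S n` is at least `n(χ - tε)` while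
`S m ≤ m(χ + tε)` for all `1 ≤ m < n`, then there is a Pliss hyperbolic time
`n' ≤ n` with exponent `χ - ε` satisfying `n' ≥ n(1-t)/(1+t)`. -/
theorem pliss_hyperbolic_time
    (a : ℕ → ℝ) (χ ε t : ℝ) (hε : 0 < ε) (ht : t ∈ Set.Ioo (0 : ℝ) 1)
    (n : ℕ) (hn : 1 ≤ n)
    (hSn : (n : ℝ) * (χ - t * ε) ≤ ∑ j ∈ Finset.range n, a j)
    (hSm : ∀ m : ℕ, 1 ≤ m → m < n → ∑ j ∈ Finset.range m, a j ≤ (m : ℝ) * (χ + t * ε)) :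
    ∃ n' : ℕ, 1 ≤ n' ∧ n' ≤ n ∧ (n : ℝ) * (1 - t) / (1 + t) ≤ (n' : ℝ) ∧
      ∀ m : ℕ, m < n' →
        ((n' : ℝ) - (m : ℝ)) * (χ - ε) ≤
          (∑ j ∈ Finset.range n', a j) - ∑ j ∈ Finset.range m, a j := by
  obtain ⟨ht0, ht1⟩ := ht
  set A : ℕ → ℝ := fun m => (∑ j ∈ Finset.range m, a j) - (m : ℝ) * (χ - ε) with hA
  obtain ⟨n', hn's, hmax⟩ :=
    Finset.exists_max_image (Finset.range (n + 1)) A ⟨0, by simp⟩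
  have hn'le : n' ≤ n := Nat.lt_succ_iff.mp (Finset.mem_range.mp hn's)
  have hnpos : (0 : ℝ) < n := by exact_mod_cast hn
  have hAn : (n : ℝ) * (ε * (1 - t)) ≤ A n := by
    simp only [hA]
    nlinarith [hSn]
  have hAn' : A n ≤ A n' := hmax n (by simp [Nat.lt_succ_iff])
  have hn'pos : 1 ≤ n' := by
    by_contra h
    push_neg at h
    interval_cases n'
    simp only [hA, Finset.range_zero, Finset.sum_empty, Nat.cast_zero, zero_mul,
      sub_zero] at hAn'
    simp only [hA] at hAn
    nlinarith [mul_pos hnpos (mul_pos hε (by linarith : (0:ℝ) < 1 - t))]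
  refine ⟨n', hn'pos, hn'le, ?_, ?_⟩
  · rw [div_le_iff₀ (by linarith)]
    rcases eq_or_lt_of_le hn'le with h | h
    · subst h; nlinarith
    · have hS := hSm n' hn'pos h
      have : A n' ≤ (n' : ℝ) * (ε * (1 + t)) := by
        simp only [hA]; nlinarith
      nlinarith
  · intro m hm
    have hAm : A m ≤ A n' := hmax m (Finset.mem_range.mpr (by omega))
    simp only [hA] at hAm
    nlinarith [hAm]
end

section
/- Let X be a metric space, f : X → X a map, Σ₀ ⊆ X a finite set with f(Σ₀) ⊆ Σ₀, and r > 0 such that for every p ∈ Σ₀: f is injective on ball(p, r), and f(ball(p, r)) is disjoint from ball(q, r) for every q ∈ Σ₀ with q ≠ f(p). Then for every integer ℓ ≥ 1, every x ∈ X, and all p, p' ∈ Σ₀, there is at most one point y ∈ X such that f^[ℓ](y) = x, y ∈ ball(p, r), f^[ℓ−1](y) ∈ ball(p', r), and f^[j](y) ∈ ⋃_{q ∈ Σ₀} ball(q, r) for every j < ℓ. -/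
/-- Uniqueness of backward branches staying near the invariant finite set `E`:
if `f` is injective on each ball `B(p, r)`, `p ∈ E`, and `f(B(p, r))` is disjoint
from `B(q, r)` for every `q ∈ E` with `q ≠ f p`, then for each `ℓ ≥ 1`, each `x`,
and each pair `p, p' ∈ E` there is at most one preimage `y ∈ f^{-ℓ}(x)` with
`y ∈ B(p, r)`, `f^[ℓ-1] y ∈ B(p', r)`, whose whole orbit up to time `ℓ - 1` stays in
the union of the balls around `E`. -/
theorem unique_backward_branch_near_invariant_set
    {X : Type*} [MetricSpace X] (f : X → X) (E : Finset X)
    (hinv : ∀ p ∈ E, f p ∈ E) (r : ℝ) (hr : 0 < r)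
    (hinj : ∀ p ∈ E, Set.InjOn f (Metric.ball p r))
    (hdisj : ∀ p ∈ E, ∀ q ∈ E, q ≠ f p →
      Disjoint (f '' Metric.ball p r) (Metric.ball q r)) :
    ∀ ℓ : ℕ, 1 ≤ ℓ → ∀ x : X, ∀ p ∈ E, ∀ p' ∈ E,
      {y : X | f^[ℓ] y = x ∧ y ∈ Metric.ball p r ∧ f^[ℓ - 1] y ∈ Metric.ball p' r ∧
        ∀ j < ℓ, ∃ q ∈ E, f^[j] y ∈ Metric.ball q r}.Subsingleton := by
  intro ℓ hℓ x p hp p' hp' y hy y' hy'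
  obtain ⟨hx, hyb, -, horb⟩ := hy
  obtain ⟨hx', hyb', -, horb'⟩ := hy'
  have hpE : ∀ j, f^[j] p ∈ E := by
    intro j
    induction j with
    | zero => simpa using hp
    | succ n ih => rw [Function.iterate_succ_apply']; exact hinv _ ih
  have key : ∀ z, z ∈ Metric.ball p r →
      (∀ j < ℓ, ∃ q ∈ E, f^[j] z ∈ Metric.ball q r) →
      ∀ j < ℓ, f^[j] z ∈ Metric.ball (f^[j] p) r := by
    intro z hz horbz j hj
    induction j with
    | zero => simpa using hz
    | succ n ih =>
      have hn : n < ℓ := Nat.lt_of_succ_lt hj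
      have h1 := ih hn
      obtain ⟨q, hq, hq2⟩ := horbz (n + 1) hj
      have himg : f^[n + 1] z ∈ f '' Metric.ball (f^[n] p) r := by
        rw [Function.iterate_succ_apply']
        exact ⟨_, h1, rfl⟩
      by_cases hqe : q = f (f^[n] p)
      · rw [Function.iterate_succ_apply']
        rw [hqe] at hq2
        rw [Function.iterate_succ_apply' f n z]
        rw [Function.iterate_succ_apply'] at hq2
        exact hq2
      · exact absurd hq2 (Set.disjoint_left.mp (hdisj _ (hpE n) q hq hqe) himg)
  have back : ∀ i ≤ ℓ - 1, f^[ℓ - 1 - i] y = f^[ℓ - 1 - i] y' := by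
    intro i
    induction i with
    | zero =>
      intro _
      have hm : ℓ - 1 < ℓ := by omega
      have h1 := key y hyb horb (ℓ - 1) hm
      have h2 := key y' hyb' horb' (ℓ - 1) hm
      have hfy : f (f^[ℓ - 1] y) = f (f^[ℓ - 1] y') := by
        rw [← Function.iterate_succ_apply' f (ℓ - 1) y,
          ← Function.iterate_succ_apply' f (ℓ - 1) y']
        simp only [Nat.succ_eq_add_one]
        have : ℓ - 1 + 1 = ℓ := by omega
        rw [this, hx, hx']
      simpa using hinj _ (hpE (ℓ - 1)) h1 h2 hfy
    | succ n ih =>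
      intro hn
      have hn' : n ≤ ℓ - 1 := by omega
      have hprev := ih hn'
      set m := ℓ - 1 - (n + 1) with hm
      have hm1 : m + 1 = ℓ - 1 - n := by omega
      have hmℓ : m < ℓ := by omega
      have h1 := key y hyb horb m hmℓ
      have h2 := key y' hyb' horb' m hmℓ
      have hfy : f (f^[m] y) = f (f^[m] y') := by
        rw [← Function.iterate_succ_apply' f m y, ← Function.iterate_succ_apply' f m y',
          Nat.succ_eq_add_one, hm1, hprev]
      exact hinj _ (hpE m) h1 h2 hfy
  have := back (ℓ - 1) le_rfl
  simpa using this
end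

section
/- Let f : ℂ → ℂ be entire, let t < 0, let p ∈ ℂ and n ≥ 1 satisfy f^[n](p) = p and λ := ‖deriv (f^[n]) p‖ > 1, and set P := −(t/n)·log λ. Let ν be a Borel measure on ℂ such that for every measurable set A ⊆ ℂ on which f is injective and on which deriv f is nowhere zero, ν(f(A)) = ∫⁻_{z ∈ A} exp(P + t·log ‖deriv f z‖) dν(z) (lower Lebesgue integral, with the integrand coerced to extended nonnegative reals). If ν(ball(p, s) \ {p}) > 0 for every s > 0, then ν(ball(p, s) \ {p}) = ∞ for every s > 0. -/
open MeasureTheory Set Metric Filter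
open scoped ENNReal NNReal Topology

private lemma deriv_iterate' {f : ℂ → ℂ} (hf : Differentiable ℂ f) (m : ℕ) (z : ℂ) :
    deriv (f^[m]) z = ∏ j ∈ Finset.range m, deriv f (f^[j] z) := by
  induction m with
  | zero => simp
  | succ m ih =>
    rw [Function.iterate_succ', Finset.prod_range_succ, ← ih]
    exact (deriv_comp z hf.differentiableAt (hf.iterate m).differentiableAt).trans (mul_comm _ _)

private lemma abs_log_sub_log_le' {a b : ℝ} (ha : 1 ≤ a) (hb : 1 ≤ b) :
    |Real.log a - Real.log b| ≤ |a - b| := by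
  have key : ∀ x y : ℝ, 1 ≤ x → x ≤ y → Real.log y - Real.log x ≤ y - x := by
    intro x y hx hxy
    have hx0 : (0:ℝ) < x := lt_of_lt_of_le one_pos hx
    have hy0 : (0:ℝ) < y := lt_of_lt_of_le hx0 hxy
    rw [← Real.log_div hy0.ne' hx0.ne']
    calc Real.log (y / x) ≤ y / x - 1 := Real.log_le_sub_one_of_pos (div_pos hy0 hx0)
      _ = (y - x) / x := by field_simp
      _ ≤ y - x := div_le_self (by linarith) hx
  rcases le_total a b with h | h
  · rw [abs_sub_comm, abs_of_nonneg (sub_nonneg.2 (Real.log_le_log (lt_of_lt_of_le one_pos ha) h)),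
      abs_sub_comm, abs_of_nonneg (sub_nonneg.2 h)]
    exact key a b ha h
  · rw [abs_of_nonneg (sub_nonneg.2 (Real.log_le_log (lt_of_lt_of_le one_pos hb) h)),
      abs_of_nonneg (sub_nonneg.2 h)]
    exact key b a hb h

private lemma injOn_iterate' {f : ℂ → ℂ} {n : ℕ} {U : ℕ → Set ℂ}
    (hUinj : ∀ j < n, Set.InjOn f (U j)) {A : Set ℂ} (hsub : ∀ j < n, f^[j] '' A ⊆ U j) :
    Set.InjOn (f^[n]) A := by
  induction n with
  | zero => simpa using Set.injOn_id A
  | succ n ih =>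
    intro x hx y hy hxy
    rw [Function.iterate_succ_apply', Function.iterate_succ_apply'] at hxy
    have h1 := hUinj n (by omega) (hsub n (by omega) ⟨x, hx, rfl⟩)
      (hsub n (by omega) ⟨y, hy, rfl⟩) hxy
    exact ih (fun j hj => hUinj j (by omega)) (fun j hj => hsub j (by omega)) hx hy h1

private lemma map_conf' {f : ℂ → ℂ} {ν : Measure ℂ} {J : ℂ → ℝ≥0∞}
    (hfc : Continuous f)
    (hconf : ∀ A : Set ℂ, MeasurableSet A → Set.InjOn f A → (∀ z ∈ A, deriv f z ≠ 0) →
      ν (f '' A) = ∫⁻ z in A, J z ∂ν)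
    {A : Set ℂ} (hA : MeasurableSet A) (hinj : Set.InjOn f A)
    (hd : ∀ z ∈ A, deriv f z ≠ 0) :
    Measure.map f (((ν.restrict A).withDensity J)) = ν.restrict (f '' A) := by
  have hfm := hfc.measurable
  ext s hs
  rw [Measure.map_apply hfm hs, withDensity_apply _ (hfm hs),
    Measure.restrict_restrict (hfm hs), Measure.restrict_apply hs]
  have h1 : MeasurableSet (f ⁻¹' s ∩ A) := (hfm hs).inter hA
  have h2 := hconf (f ⁻¹' s ∩ A) h1 (hinj.mono Set.inter_subset_right)
    (fun z hz => hd z hz.2)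
  rw [Set.image_preimage_inter] at h2
  rw [← h2]

private lemma map_withDensity_comp' {μ : Measure ℂ} {g : ℂ → ℂ} (hg : Measurable g)
    {ρ : ℂ → ℝ≥0∞} (hρ : Measurable ρ) :
    Measure.map g (μ.withDensity (fun z => ρ (g z))) = (Measure.map g μ).withDensity ρ := by
  ext s hs
  rw [Measure.map_apply hg hs, withDensity_apply _ (hg hs), withDensity_apply _ hs,
    ← setLIntegral_map hs hρ hg]

private lemma map_conf_iterate' {f : ℂ → ℂ} (hf : Differentiable ℂ f) {ν : Measure ℂ}
    {J : ℂ → ℝ≥0∞} (hJ : Measurable J)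
    (hconf : ∀ A : Set ℂ, MeasurableSet A → Set.InjOn f A → (∀ z ∈ A, deriv f z ≠ 0) →
      ν (f '' A) = ∫⁻ z in A, J z ∂ν)
    {n : ℕ} {U : ℕ → Set ℂ}
    (hUinj : ∀ j < n, Set.InjOn f (U j)) (hUd : ∀ j < n, ∀ z ∈ U j, deriv f z ≠ 0)
    {A : Set ℂ} (hA : MeasurableSet A) (hsub : ∀ j < n, f^[j] '' A ⊆ U j) :
    Measure.map (f^[n]) ((ν.restrict A).withDensity
        (fun z => ∏ j ∈ Finset.range n, J (f^[j] z)))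
      = ν.restrict (f^[n] '' A) := by
  induction n with
  | zero => simp
  | succ n ih =>
    have hUinj' : ∀ j < n, Set.InjOn f (U j) := fun j hj => hUinj j (by omega)
    have hUd' : ∀ j < n, ∀ z ∈ U j, deriv f z ≠ 0 := fun j hj => hUd j (by omega)
    have hsub' : ∀ j < n, f^[j] '' A ⊆ U j := fun j hj => hsub j (by omega)
    have hB : MeasurableSet (f^[n] '' A) :=
      hA.image_of_continuousOn_injOn ((hf.iterate n).continuous.continuousOn)
        (injOn_iterate' hUinj' hsub')
    have hinjB : Set.InjOn f (f^[n] '' A) := (hUinj n (by omega)).mono (hsub n (by omega))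
    have hdB : ∀ z ∈ f^[n] '' A, deriv f z ≠ 0 :=
      fun z hz => hUd n (by omega) z (hsub n (by omega) hz)
    have key := map_conf' hf.continuous hconf hB hinjB hdB
    have hprod : (fun z => ∏ j ∈ Finset.range (n+1), J (f^[j] z)) =
        ((fun z => ∏ j ∈ Finset.range n, J (f^[j] z)) * (fun z => J (f^[n] z))) := by
      funext z; simp [Finset.prod_range_succ]
    have hprodmeas : Measurable (fun z => ∏ j ∈ Finset.range n, J (f^[j] z)) := by
      apply Finset.measurable_prod
      intro j _
      exact hJ.comp (hf.iterate j).continuous.measurable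
    rw [hprod, withDensity_mul _ hprodmeas (show Measurable (fun z => J (f^[n] z)) from hJ.comp (hf.iterate n).continuous.measurable),
      Function.iterate_succ',
      ← Measure.map_map hf.continuous.measurable (hf.iterate n).continuous.measurable,
      map_withDensity_comp' (hf.iterate n).continuous.measurable hJ, ih hUinj' hUd' hsub',
      key, Set.image_comp]

/-- Part 2 of Proposition 2.2: if `ν` is `e^{P - φ_t}`-conformal outside the critical
set for an entire map `f` with a repelling periodic point `p` of exponent `χ(p)` and
`P = -t·χ(p)`, `t < 0`, and `ν` gives positive mass to every punctured neighborhood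
of `p`, then it gives infinite mass to every punctured neighborhood of `p`. -/
theorem conformal_measure_infinite_near_exceptional_point
    (f : ℂ → ℂ) (hf : Differentiable ℂ f) (t : ℝ) (ht : t < 0)
    (p : ℂ) (n : ℕ) (hn : 1 ≤ n) (hper : f^[n] p = p)
    (hrep : 1 < ‖deriv (f^[n]) p‖)
    (P : ℝ) (hP : P = -(t / n) * Real.log ‖deriv (f^[n]) p‖)
    (ν : Measure ℂ)
    (hconf : ∀ A : Set ℂ, MeasurableSet A → Set.InjOn f A → (∀ z ∈ A, deriv f z ≠ 0) →
      ν (f '' A) = ∫⁻ z in A, ENNReal.ofReal (Real.exp (P + t * Real.log ‖deriv f z‖)) ∂ν)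
    (hpos : ∀ s > 0, 0 < ν (Metric.ball p s \ {p})) :
    ∀ s > 0, ν (Metric.ball p s \ {p}) = ⊤ := by
  classical
  set g := f^[n] with hg_def
  have hg : Differentiable ℂ g := hf.iterate n
  set L : ℝ := ‖deriv g p‖ with hL_def
  have hL1 : 1 < L := hrep
  set J : ℂ → ℝ≥0∞ := fun z => ENNReal.ofReal (Real.exp (P + t * Real.log ‖deriv f z‖))
    with hJ_def
  -- continuity of deriv f and deriv g
  have hfA : AnalyticOnNhd ℂ f Set.univ := fun z _ => hf.analyticAt z
  have hgA : AnalyticOnNhd ℂ g Set.univ := fun z _ => hg.analyticAt z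
  have hdfA : AnalyticOnNhd ℂ (deriv f) Set.univ := hfA.deriv
  have hdgA : AnalyticOnNhd ℂ (deriv g) Set.univ := hgA.deriv
  have hdfc : Continuous (deriv f) :=
    continuous_iff_continuousAt.2 fun z => (hdfA z (Set.mem_univ z)).continuousAt
  have hdgc : Continuous (deriv g) :=
    continuous_iff_continuousAt.2 fun z => (hdgA z (Set.mem_univ z)).continuousAt
  have hJmeas : Measurable J := by
    apply Measurable.ennreal_ofReal
    exact (Real.continuous_exp.measurable).comp
      (measurable_const.add (measurable_const.mul
        (Real.measurable_log.comp hdfc.norm.measurable)))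
  -- chain rule and nonvanishing along the orbit
  have hchain : ∀ z, deriv g z = ∏ j ∈ Finset.range n, deriv f (f^[j] z) :=
    deriv_iterate' hf n
  have hdgp : deriv g p ≠ 0 := by
    intro h0; rw [hL_def, h0] at hL1; norm_num at hL1
  have hdj : ∀ j < n, deriv f (f^[j] p) ≠ 0 := by
    intro j hj hzero
    exact hdgp (by rw [hchain p]; exact Finset.prod_eq_zero (Finset.mem_range.2 hj) hzero)
  -- strict differentiability
  have hstrict : ∀ (F : ℂ → ℂ), Differentiable ℂ F → ∀ z, HasStrictDerivAt F (deriv F z) z := by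
    intro F hF z
    obtain ⟨q, hq⟩ := hF.analyticAt z
    have h1 := hq.hasStrictDerivAt
    rwa [← hq.deriv] at h1
  -- injectivity neighborhoods along the orbit
  have hUex : ∀ j : ℕ, ∃ U : Set ℂ, IsOpen U ∧ Set.InjOn f U ∧ (∀ z ∈ U, deriv f z ≠ 0) ∧
      (deriv f (f^[j] p) ≠ 0 → f^[j] p ∈ U) := by
    intro j
    by_cases hj : deriv f (f^[j] p) ≠ 0
    · set q := f^[j] p with hq_def
      have hs := (hstrict f hf q).hasStrictFDerivAt_equiv hj
      set e := hs.toOpenPartialHomeomorph f with he_def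
      have hecoe : (e : ℂ → ℂ) = f := hs.toOpenPartialHomeomorph_coe
      refine ⟨e.source ∩ {z | deriv f z ≠ 0},
        e.open_source.inter (isOpen_compl_singleton.preimage hdfc), ?_, fun z hz => hz.2, ?_⟩
      · have h2 := e.injOn
        rw [hecoe] at h2
        exact h2.mono Set.inter_subset_left
      · exact fun _ => ⟨hs.mem_toOpenPartialHomeomorph_source, hj⟩
    · exact ⟨∅, isOpen_empty, Set.injOn_empty f, by simp, fun h => absurd h hj⟩
  choose U hUopen hUinj hUd hUmem using hUex
  -- the inverse branch of g at p
  have hGs := (hstrict g hg p).hasStrictFDerivAt_equiv hdgp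
  set E := hGs.toOpenPartialHomeomorph g with hE_def
  have hEcoe : (E : ℂ → ℂ) = g := hGs.toOpenPartialHomeomorph_coe
  have hpE : p ∈ E.source := hGs.mem_toOpenPartialHomeomorph_source
  have hpEt : p ∈ E.target := by
    have := E.map_source hpE
    rwa [hEcoe, hper] at this
  set h : ℂ → ℂ := ⇑E.symm with hh_def
  have hhp : h p = p := by
    have h1 := E.left_inv hpE
    rw [hEcoe, hper] at h1
    exact h1
  have hgh : ∀ x ∈ E.target, g (h x) = x := by
    intro x hx
    have h1 := E.right_inv hx
    rwa [hEcoe] at h1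
  -- contraction constant
  set κ : ℝ := (1 + L⁻¹) / 2 with hκ_def
  have hLpos : (0:ℝ) < L := lt_trans one_pos hL1
  have hκ0 : 0 < κ := by positivity
  have hκ1 : κ < 1 := by
    rw [hκ_def]
    have : L⁻¹ < 1 := inv_lt_one_of_one_lt₀ hL1
    linarith
  have hinvκ : L⁻¹ < κ := by
    rw [hκ_def]
    have : L⁻¹ < 1 := inv_lt_one_of_one_lt₀ hL1
    linarith
  -- Lipschitz bound for the inverse branch near p
  have hinv : HasStrictDerivAt h (deriv g p)⁻¹ p := by
    have h1 := (hstrict g hg p).to_localInverse hdgp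
    rw [hper] at h1
    exact h1
  have hlipinv : ∃ sinv ∈ 𝓝 p, LipschitzOnWith κ.toNNReal h sinv := by
    apply hinv.hasStrictFDerivAt.exists_lipschitzOnWith_of_nnnorm_lt
    have hnorm : ‖(deriv g p)⁻¹‖ = L⁻¹ := by rw [norm_inv, hL_def]
    rw [← NNReal.coe_lt_coe]
    push_cast
    rw [Real.coe_toNNReal _ hκ0.le]
    simpa [hnorm] using hinvκ
  obtain ⟨sinv, hsinv_mem, hlip⟩ := hlipinv
  -- Lipschitz bound for deriv g near p
  obtain ⟨C, sC, hsC_mem, hlipC⟩ :=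
    ((hdgA p (Set.mem_univ p)).hasStrictFDerivAt).exists_lipschitzOnWith
  -- choose a good radius r
  have hev : ∀ᶠ z in 𝓝 p, z ∈ E.source ∧ z ∈ E.target ∧ z ∈ sinv ∧ z ∈ sC ∧
      1 < ‖deriv g z‖ ∧ ∀ j ∈ Finset.range n, f^[j] z ∈ U j := by
    have h1 : ∀ᶠ z in 𝓝 p, z ∈ E.source := E.open_source.mem_nhds hpE
    have h2 : ∀ᶠ z in 𝓝 p, z ∈ E.target := E.open_target.mem_nhds hpEt
    have h5 : ∀ᶠ z in 𝓝 p, 1 < ‖deriv g z‖ := by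
      have hc : ContinuousAt (fun z => ‖deriv g z‖) p := (hdgc.norm).continuousAt
      exact hc.preimage_mem_nhds (Ioi_mem_nhds hL1)
    have h6 : ∀ᶠ z in 𝓝 p, ∀ j ∈ Finset.range n, f^[j] z ∈ U j := by
      rw [Filter.eventually_all_finset]
      intro j hj
      have hcont : Continuous (f^[j]) := (hf.iterate j).continuous
      exact hcont.continuousAt.preimage_mem_nhds
        ((hUopen j).mem_nhds (hUmem j (hdj j (Finset.mem_range.1 hj))))
    filter_upwards [h1, h2, hsinv_mem, hsC_mem, h5, h6] with z z1 z2 z3 z4 z5 z6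
    exact ⟨z1, z2, z3, z4, z5, z6⟩
  obtain ⟨r, hr0, hrB⟩ := Metric.eventually_nhds_iff_ball.1 hev
  set B : Set ℂ := Metric.ball p r with hB_def
  have hpB : p ∈ B := Metric.mem_ball_self hr0
  have hBsrc : B ⊆ E.source := fun z hz => (hrB z hz).1
  have hBtgt : B ⊆ E.target := fun z hz => (hrB z hz).2.1
  have hlipB : LipschitzOnWith κ.toNNReal h B :=
    hlip.mono (fun z hz => (hrB z hz).2.2.1)
  have hlipCB : LipschitzOnWith C (deriv g) B :=
    hlipC.mono (fun z hz => (hrB z hz).2.2.2.1)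
  have hBnorm : ∀ z ∈ B, 1 < ‖deriv g z‖ := fun z hz => (hrB z hz).2.2.2.2.1
  have hBorb : ∀ z ∈ B, ∀ j < n, f^[j] z ∈ U j :=
    fun z hz j hj => (hrB z hz).2.2.2.2.2 j (Finset.mem_range.2 hj)
  -- the distance contraction of h on B
  have hcontr : ∀ z ∈ B, dist (h z) p ≤ κ * dist z p := by
    intro z hz
    have := hlipB.dist_le_mul z hz p hpB
    rwa [hhp, Real.coe_toNNReal _ hκ0.le] at this
  -- the nested sets S k
  set S : ℕ → Set ℂ := fun k => h^[k] '' B with hS_def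
  have hS0 : S 0 = B := by simp [hS_def]
  have hSsucc : ∀ k, S (k + 1) = h '' S k := by
    intro k
    rw [hS_def]
    simp only [Function.iterate_succ', Set.image_comp]
  -- S k ⊆ ball p (κ^k * r) and S k ⊆ B
  have hSball : ∀ k, S k ⊆ Metric.ball p (κ ^ k * r) ∧ S k ⊆ B := by
    intro k
    induction k with
    | zero =>
      rw [hS0]
      exact ⟨fun z hz => by simpa [hB_def] using hz, subset_rfl⟩
    | succ k ih =>
      have hsub1 : S (k+1) ⊆ Metric.ball p (κ ^ (k+1) * r) := by
        rw [hSsucc k]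
        rintro - ⟨w, hw, rfl⟩
        have hwB : w ∈ B := ih.2 hw
        have h1 := hcontr w hwB
        have h2 : dist w p < κ ^ k * r := ih.1 hw
        have : dist (h w) p ≤ κ * dist w p := h1
        rw [Metric.mem_ball]
        calc dist (h w) p ≤ κ * dist w p := h1
          _ < κ * (κ ^ k * r) := by
            apply mul_lt_mul_of_pos_left h2 hκ0
          _ = κ ^ (k+1) * r := by ring
      refine ⟨hsub1, hsub1.trans ?_⟩
      intro z hz
      rw [Metric.mem_ball] at hz ⊢
      calc dist z p < κ ^ (k+1) * r := hz
        _ ≤ 1 * r := by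
          apply mul_le_mul_of_nonneg_right _ hr0.le
          exact pow_le_one₀ hκ0.le hκ1.le
        _ = r := one_mul r
  have hSB : ∀ k, S k ⊆ B := fun k => (hSball k).2
  have hpS : ∀ k, p ∈ S k := by
    intro k
    induction k with
    | zero => rw [hS0]; exact hpB
    | succ k ih => rw [hSsucc k]; exact ⟨p, ih, hhp⟩
  have hSopen : ∀ k, IsOpen (S k) := by
    intro k
    induction k with
    | zero => rw [hS0]; exact Metric.isOpen_ball
    | succ k ih =>
      rw [hSsucc k]
      exact E.isOpen_image_symm_of_subset_target ih ((hSB k).trans hBtgt)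
  have hhB : h '' B ⊆ B := by
    rintro - ⟨w, hw, rfl⟩
    rw [Metric.mem_ball]
    have h1 := hcontr w hw
    have h2 : dist w p < r := Metric.mem_ball.1 hw
    nlinarith [dist_nonneg (x := w) (y := p)]
  have hSmono : ∀ k, S (k + 1) ⊆ S k := by
    intro k
    have heq : S (k + 1) = h^[k] '' (h '' B) := by
      rw [hS_def]
      simp only [Function.iterate_succ, Set.image_comp]
    rw [heq]
    exact Set.image_mono hhB
  -- the annuli A k
  set A : ℕ → Set ℂ := fun k => S k \ S (k + 1) with hA_def
  have hAmeas : ∀ k, MeasurableSet (A k) :=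
    fun k => ((hSopen k).measurableSet).diff (hSopen (k+1)).measurableSet
  have hSanti : Antitone S := antitone_nat_of_succ_le hSmono
  have hdisj' : ∀ k l, k < l → Disjoint (A k) (A l) := by
    intro k l hkl
    rw [Set.disjoint_left]
    intro x hxk hxl
    exact hxk.2 (hSanti (by omega : k + 1 ≤ l) hxl.1)
  have hdisj : Pairwise (Function.onFun Disjoint A) := by
    intro k l hkl
    rcases lt_or_gt_of_ne hkl with h | h
    · exact hdisj' k l h
    · exact (hdisj' l k h).symm
  have hUnion : (⋃ k, A k) = B \ {p} := by
    ext z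
    simp only [Set.mem_iUnion, Set.mem_diff, Set.mem_singleton_iff]
    constructor
    · rintro ⟨k, hzk⟩
      refine ⟨(hSB k) hzk.1, ?_⟩
      rintro rfl
      exact hzk.2 (hpS (k+1))
    · rintro ⟨hzB, hzp⟩
      have hdistpos : 0 < dist z p := dist_pos.2 hzp
      obtain ⟨m, hm⟩ := exists_pow_lt_of_lt_one (div_pos hdistpos hr0) hκ1
      have hznot : z ∉ S m := by
        intro hzs
        have := (hSball m).1 hzs
        rw [Metric.mem_ball] at this
        rw [lt_div_iff₀ hr0] at hm
        -- hm : κ ^ m < dist z p / r  →  κ ^ m * r < dist z p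
        linarith
      have hex : ∃ k, z ∉ S k := ⟨m, hznot⟩
      have hk0ne : Nat.find hex ≠ 0 := by
        intro h0
        have := Nat.find_spec hex
        rw [h0, hS0] at this
        exact this hzB
      refine ⟨Nat.find hex - 1, ?_, ?_⟩
      · have := Nat.find_min hex (show Nat.find hex - 1 < Nat.find hex by omega)
        simpa using this
      · have h1 : Nat.find hex - 1 + 1 = Nat.find hex := by omega
        rw [h1]
        exact Nat.find_spec hex
  -- injectivity of h and the recursion g '' A (k+1) = A k
  have hinjh : Set.InjOn h B := E.symm.injOn.mono hBtgt
  have hAh : ∀ k, A (k + 1) = h '' A k := by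
    intro k
    have h1 : A (k+1) = h '' S k \ h '' S (k+1) := by
      rw [hA_def]
      simp only
      rw [hSsucc k, hSsucc (k+1), hSsucc k]
    rw [h1, ← (hinjh.mono (hSB k)).image_diff_subset (hSmono k)]
  have hgS : ∀ X, X ⊆ B → g '' (h '' X) = X := by
    intro X hX
    rw [← Set.image_comp]
    have : Set.EqOn (g ∘ h) id X := fun x hx => hgh x (hBtgt (hX hx))
    rw [this.image_eq, Set.image_id]
  have hgAk : ∀ k, g '' A (k + 1) = A k := by
    intro k
    rw [hAh k]
    exact hgS (A k) (fun x hx => (hSB k) hx.1)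
  -- conformality along the annuli
  have hmeasA : ∀ k, ν (A k) =
      ∫⁻ z in A (k+1), (∏ j ∈ Finset.range n, J (f^[j] z)) ∂ν := by
    intro k
    have hsubU : ∀ j < n, f^[j] '' A (k+1) ⊆ U j := by
      intro j hj
      rintro - ⟨w, hw, rfl⟩
      exact hBorb w ((hSB (k+1)) hw.1) j hj
    have hmap := map_conf_iterate' hf hJmeas hconf (fun j _ => hUinj j)
      (fun j _ => hUd j) (hAmeas (k+1)) hsubU
    calc ν (A k) = ν.restrict (f^[n] '' A (k+1)) Set.univ := by
          rw [Measure.restrict_apply_univ, ← hg_def, hgAk k]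
      _ = (Measure.map (f^[n]) ((ν.restrict (A (k+1))).withDensity
            (fun z => ∏ j ∈ Finset.range n, J (f^[j] z)))) Set.univ := by rw [hmap]
      _ = ((ν.restrict (A (k+1))).withDensity
            (fun z => ∏ j ∈ Finset.range n, J (f^[j] z))) Set.univ := by
          rw [Measure.map_apply (hf.iterate n).continuous.measurable MeasurableSet.univ,
            Set.preimage_univ]
      _ = ∫⁻ z in A (k+1), (∏ j ∈ Finset.range n, J (f^[j] z)) ∂ν := by
          rw [withDensity_apply _ MeasurableSet.univ, setLIntegral_univ]
  -- pointwise bound for the Jacobian density on A (k+1)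
  set D : ℝ := |t| * C * r with hD_def
  have hDnonneg : 0 ≤ D := by
    rw [hD_def]; positivity
  have hbound : ∀ k, ∀ z ∈ A (k+1),
      (∏ j ∈ Finset.range n, J (f^[j] z)) ≤ ENNReal.ofReal (Real.exp (D * κ ^ (k+1))) := by
    intro k z hz
    have hzB : z ∈ B := (hSB (k+1)) hz.1
    have hzball : dist z p < κ ^ (k+1) * r := by
      have := (hSball (k+1)).1 hz.1
      rwa [Metric.mem_ball] at this
    have hdnz : ∀ j ∈ Finset.range n, ‖deriv f (f^[j] z)‖ ≠ 0 := by
      intro j hj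
      exact norm_ne_zero_iff.2 (hUd j _ (hBorb z hzB j (Finset.mem_range.1 hj)))
    have hprodeq : (∏ j ∈ Finset.range n, J (f^[j] z)) =
        ENNReal.ofReal (Real.exp ((n:ℝ) * P + t * Real.log ‖deriv g z‖)) := by
      rw [hJ_def]
      simp only
      rw [← ENNReal.ofReal_prod_of_nonneg (fun i _ => (Real.exp_pos _).le), ← Real.exp_sum]
      congr 1
      rw [Finset.sum_add_distrib, Finset.sum_const, Finset.card_range, ← Finset.mul_sum]
      have hlog : ∑ j ∈ Finset.range n, Real.log ‖deriv f (f^[j] z)‖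
          = Real.log ‖deriv g z‖ := by
        rw [← Real.log_prod hdnz, ← norm_prod, ← hchain z]
      rw [hlog, nsmul_eq_mul]
    rw [hprodeq]
    apply ENNReal.ofReal_le_ofReal
    apply Real.exp_le_exp.2
    have hn0 : (n:ℝ) ≠ 0 := by
      have : 0 < n := hn
      positivity
    have hnP : (n:ℝ) * P = -t * Real.log L := by
      rw [hP]; field_simp
    have heq : (n:ℝ) * P + t * Real.log ‖deriv g z‖
        = t * (Real.log ‖deriv g z‖ - Real.log L) := by rw [hnP]; ring
    rw [heq]
    have hlb : |Real.log ‖deriv g z‖ - Real.log L| ≤ |‖deriv g z‖ - L| :=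
      abs_log_sub_log_le' (hBnorm z hzB).le hL1.le
    have hCd : |‖deriv g z‖ - L| ≤ C * dist z p := by
      have h2 := hlipCB.dist_le_mul z hzB p hpB
      calc |‖deriv g z‖ - L| ≤ ‖deriv g z - deriv g p‖ := by
            rw [hL_def]; exact abs_norm_sub_norm_le _ _
        _ = dist (deriv g z) (deriv g p) := (dist_eq_norm _ _).symm
        _ ≤ C * dist z p := h2
    calc t * (Real.log ‖deriv g z‖ - Real.log L)
        ≤ |t * (Real.log ‖deriv g z‖ - Real.log L)| := le_abs_self _
      _ = |t| * |Real.log ‖deriv g z‖ - Real.log L| := abs_mul _ _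
      _ ≤ |t| * (C * dist z p) :=
          mul_le_mul_of_nonneg_left (hlb.trans hCd) (abs_nonneg t)
      _ ≤ |t| * (C * (κ ^ (k+1) * r)) := by
          apply mul_le_mul_of_nonneg_left _ (abs_nonneg t)
          exact mul_le_mul_of_nonneg_left hzball.le C.2
      _ = D * κ ^ (k+1) := by rw [hD_def]; ring
  -- the one-step inequality
  have hstep : ∀ k, ν (A k) ≤ ENNReal.ofReal (Real.exp (D * κ ^ (k+1))) * ν (A (k+1)) := by
    intro k
    rw [hmeasA k]
    calc ∫⁻ z in A (k+1), (∏ j ∈ Finset.range n, J (f^[j] z)) ∂ν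
        ≤ ∫⁻ _ in A (k+1), ENNReal.ofReal (Real.exp (D * κ ^ (k+1))) ∂ν :=
          setLIntegral_mono measurable_const (hbound k)
      _ = ENNReal.ofReal (Real.exp (D * κ ^ (k+1))) * ν (A (k+1)) :=
          setLIntegral_const _ _
  -- some annulus has positive measure
  have hex0 : ∃ k, ν (A k) ≠ 0 := by
    by_contra hall
    push_neg at hall
    have h0 : ν (⋃ k, A k) = 0 := measure_iUnion_null hall
    rw [hUnion] at h0
    exact absurd h0 (hpos r hr0).ne'
  obtain ⟨k0, hk0⟩ := hex0
  -- geometric control of the measures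
  have hsumbound : ∀ m : ℕ, ∑ i ∈ Finset.range m, D * κ ^ (k0 + 1 + i) ≤ D * (1 - κ)⁻¹ := by
    intro m
    rw [← Finset.mul_sum]
    apply mul_le_mul_of_nonneg_left _ hDnonneg
    calc ∑ i ∈ Finset.range m, κ ^ (k0 + 1 + i)
        ≤ ∑ i ∈ Finset.range m, κ ^ i := by
          apply Finset.sum_le_sum
          intro i _
          exact pow_le_pow_of_le_one hκ0.le hκ1.le (by omega)
      _ ≤ ∑' i : ℕ, κ ^ i :=
          Summable.sum_le_tsum _ (fun i _ => pow_nonneg hκ0.le i)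
            (summable_geometric_of_lt_one hκ0.le hκ1)
      _ = (1 - κ)⁻¹ := tsum_geometric_of_lt_one hκ0.le hκ1
  have hchain2 : ∀ m : ℕ, ν (A k0) ≤
      ENNReal.ofReal (Real.exp (∑ i ∈ Finset.range m, D * κ ^ (k0 + 1 + i))) * ν (A (k0 + m)) := by
    intro m
    induction m with
    | zero => simp
    | succ m ih =>
      calc ν (A k0)
          ≤ ENNReal.ofReal (Real.exp (∑ i ∈ Finset.range m, D * κ ^ (k0 + 1 + i)))
              * ν (A (k0 + m)) := ih
        _ ≤ ENNReal.ofReal (Real.exp (∑ i ∈ Finset.range m, D * κ ^ (k0 + 1 + i)))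
              * (ENNReal.ofReal (Real.exp (D * κ ^ (k0 + m + 1))) * ν (A (k0 + m + 1))) :=
            mul_le_mul_right (hstep (k0 + m)) _
        _ = ENNReal.ofReal (Real.exp (∑ i ∈ Finset.range (m+1), D * κ ^ (k0 + 1 + i)))
              * ν (A (k0 + (m+1))) := by
            rw [← mul_assoc, ← ENNReal.ofReal_mul (Real.exp_pos _).le, ← Real.exp_add,
              Finset.sum_range_succ, show k0 + 1 + m = k0 + m + 1 from by omega,
              show k0 + (m + 1) = k0 + m + 1 from by omega]
  have hchain3 : ∀ m : ℕ, ν (A k0) ≤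
      ENNReal.ofReal (Real.exp (D * (1 - κ)⁻¹)) * ν (A (k0 + m)) := by
    intro m
    refine (hchain2 m).trans (mul_le_mul_left ?_ _)
    exact ENNReal.ofReal_le_ofReal (Real.exp_le_exp.2 (hsumbound m))
  set c0 : ℝ≥0∞ := ν (A k0) / ENNReal.ofReal (Real.exp (D * (1 - κ)⁻¹)) with hc0_def
  have hc0pos : 0 < c0 := by
    rw [hc0_def]
    exact ENNReal.div_pos hk0 ENNReal.ofReal_ne_top
  have hlow : ∀ m : ℕ, c0 ≤ ν (A (k0 + m)) := by
    intro m
    have hne : ENNReal.ofReal (Real.exp (D * (1 - κ)⁻¹)) ≠ 0 :=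
      (ENNReal.ofReal_pos.2 (Real.exp_pos _)).ne'
    rw [hc0_def, ENNReal.div_le_iff_le_mul (Or.inl hne) (Or.inl ENNReal.ofReal_ne_top)]
    exact (hchain3 m).trans_eq (mul_comm _ _)
  -- conclusion
  intro s hs
  obtain ⟨N, hN⟩ := exists_pow_lt_of_lt_one (div_pos hs hr0) hκ1
  rw [lt_div_iff₀ hr0] at hN
  have hsubN : ∀ m : ℕ, A (k0 + N + m) ⊆ Metric.ball p s \ {p} := by
    intro m z hz
    constructor
    · have h1 : dist z p < κ ^ (k0 + N + m) * r := by
        have := (hSball (k0 + N + m)).1 hz.1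
        rwa [Metric.mem_ball] at this
      have h2 : κ ^ (k0 + N + m) ≤ κ ^ N := pow_le_pow_of_le_one hκ0.le hκ1.le (by omega)
      rw [Metric.mem_ball]
      have h3 : κ ^ (k0 + N + m) * r ≤ κ ^ N * r := mul_le_mul_of_nonneg_right h2 hr0.le
      linarith
    · rintro rfl
      exact hz.2 (hpS _)
  have hdisjN : Pairwise (Function.onFun Disjoint (fun m => A (k0 + N + m))) := by
    intro i j hij
    exact hdisj (by omega : k0 + N + i ≠ k0 + N + j)
  have hsum : ν (⋃ m, A (k0 + N + m)) = ∑' m, ν (A (k0 + N + m)) :=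
    measure_iUnion hdisjN (fun m => hAmeas _)
  have htop : (⊤ : ℝ≥0∞) ≤ ν (Metric.ball p s \ {p}) := by
    calc (⊤ : ℝ≥0∞) = ∑' _ : ℕ, c0 := (ENNReal.tsum_const_eq_top_of_ne_zero hc0pos.ne').symm
      _ ≤ ∑' m, ν (A (k0 + N + m)) := ENNReal.tsum_le_tsum (fun m => by
          have := hlow (N + m)
          rwa [← add_assoc] at this)
      _ = ν (⋃ m, A (k0 + N + m)) := hsum.symm
      _ ≤ ν (Metric.ball p s \ {p}) := measure_mono (Set.iUnion_subset hsubN)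
  exact top_le_iff.1 htop
end

section
/- Let f : ℂ → ℂ be entire, let t, P ∈ ℝ, and let ν be a Borel measure on ℂ such that for every measurable set A ⊆ ℂ on which f is injective and on which deriv f is nowhere zero, ν(f(A)) = ∫⁻_{z ∈ A} exp(P + t·log ‖deriv f z‖) dν(z) (lower Lebesgue integral, with the integrand coerced to extended nonnegative reals). Let n ≥ 1 be an integer, U ⊆ ℂ a measurable set, x ∈ U, and K ≥ 1 such that: f^[n] is injective on U; deriv f (f^[j](z)) ≠ 0 for every z ∈ U and every j < n; and K⁻¹·‖deriv (f^[n]) x‖ ≤ ‖deriv (f^[n]) z‖ ≤ K·‖deriv (f^[n]) x‖ for every z ∈ U. Then ν(U) ≤ K^{|t|}·exp(−n·P)·‖deriv (f^[n]) x‖^{−t} · ν(f^[n](U)). -/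
open MeasureTheory ENNReal

/-- Pullback estimate for conformal measures on univalent pull-backs with distortion
bounded by `K`: if `ν` is `e^{P + t·log‖f'‖}`-conformal outside the critical set,
`f^[n]` is injective on `U` avoiding critical points, and the derivative of `f^[n]`
on `U` is comparable to its value at `x ∈ U` up to a factor `K`, then
`ν U ≤ K^{|t|}·e^{-nP}·‖(f^[n])'(x)‖^{-t}·ν (f^[n] '' U)`. -/
theorem conformal_measure_pullback_estimate
    (f : ℂ → ℂ) (hf : Differentiable ℂ f) (t P : ℝ)
    (ν : Measure ℂ)
    (hconf : ∀ A : Set ℂ, MeasurableSet A → Set.InjOn f A → (∀ z ∈ A, deriv f z ≠ 0) →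
      ν (f '' A) = ∫⁻ z in A, ENNReal.ofReal (Real.exp (P + t * Real.log ‖deriv f z‖)) ∂ν)
    (n : ℕ) (hn : 1 ≤ n) (U : Set ℂ) (hU : MeasurableSet U) (x : ℂ) (hx : x ∈ U)
    (K : ℝ) (hK : 1 ≤ K)
    (hinj : Set.InjOn (f^[n]) U)
    (hcrit : ∀ z ∈ U, ∀ j < n, deriv f (f^[j] z) ≠ 0)
    (hdist : ∀ z ∈ U, K⁻¹ * ‖deriv (f^[n]) x‖ ≤ ‖deriv (f^[n]) z‖ ∧
      ‖deriv (f^[n]) z‖ ≤ K * ‖deriv (f^[n]) x‖) :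
    ν U ≤ ENNReal.ofReal (K ^ |t| * Real.exp (-(n : ℝ) * P) * ‖deriv (f^[n]) x‖ ^ (-t)) *
      ν (f^[n] '' U) := by
  set g : ℂ → ℝ≥0∞ := fun z => ENNReal.ofReal (Real.exp (P + t * Real.log ‖deriv f z‖)) with hg
  have hfm : Measurable f := hf.continuous.measurable
  have hgm : Measurable g := by
    apply ENNReal.measurable_ofReal.comp
    apply Real.measurable_exp.comp
    exact measurable_const.add
      ((Real.measurable_log.comp (measurable_deriv f).norm).const_mul t)
  -- one-step conformal lemma as a measure identity
  have step : ∀ B : Set ℂ, MeasurableSet B → Set.InjOn f B → (∀ z ∈ B, deriv f z ≠ 0) →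
      Measure.map f ((ν.restrict B).withDensity g) = ν.restrict (f '' B) := by
    intro B hB hBi hBc
    ext S hS
    rw [Measure.map_apply hfm hS, withDensity_apply _ (hfm hS),
      Measure.restrict_restrict (hfm hS), Measure.restrict_apply hS]
    have himg : f '' (f ⁻¹' S ∩ B) = S ∩ f '' B := by
      ext w
      constructor
      · rintro ⟨a, ⟨haS, haB⟩, rfl⟩; exact ⟨haS, a, haB, rfl⟩
      · rintro ⟨hwS, a, haB, rfl⟩; exact ⟨a, ⟨hwS, haB⟩, rfl⟩
    rw [← himg, hconf _ ((hfm hS).inter hB) (hBi.mono Set.inter_subset_right)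
      (fun z hz => hBc z hz.2)]
  -- commuting withDensity with map
  have wdmap : ∀ (μ : Measure ℂ) (φ : ℂ → ℂ), Measurable φ →
      Measure.map φ (μ.withDensity (g ∘ φ)) = (Measure.map φ μ).withDensity g := by
    intro μ φ hφ
    ext S hS
    rw [Measure.map_apply hφ hS, withDensity_apply _ hS, withDensity_apply _ (hφ hS),
      setLIntegral_map hS hgm hφ]
    rfl
  -- the key induction
  have key : ∀ m : ℕ, ∀ A : Set ℂ, MeasurableSet A → Set.InjOn (f^[m]) A →
      (∀ z ∈ A, ∀ j < m, deriv f (f^[j] z) ≠ 0) →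
      Measure.map (f^[m]) ((ν.restrict A).withDensity
        (fun z => ∏ j ∈ Finset.range m, g (f^[j] z))) = ν.restrict (f^[m] '' A) := by
    intro m
    induction m with
    | zero =>
      intro A hA _ _
      simp [Function.iterate_zero, withDensity_one]
    | succ m ih =>
      intro A hA hAi hAc
      have hinjm : Set.InjOn (f^[m]) A := by
        intro a ha b hb hab
        apply hAi ha hb
        rw [Function.iterate_succ_apply', Function.iterate_succ_apply', hab]
      have hDm : Measurable (fun z => ∏ j ∈ Finset.range m, g (f^[j] z)) :=
        Finset.measurable_prod _ fun j _ =>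
          hgm.comp (hf.iterate j).continuous.measurable
      have hBmeas : MeasurableSet (f^[m] '' A) :=
        hA.image_of_continuousOn_injOn ((hf.iterate m).continuous.continuousOn) hinjm
      have hBinj : Set.InjOn f (f^[m] '' A) := by
        rintro _ ⟨a, ha, rfl⟩ _ ⟨b, hb, rfl⟩ hab
        have hab' : a = b := hAi ha hb (by
          rw [Function.iterate_succ_apply', Function.iterate_succ_apply']; exact hab)
        rw [hab']
      have hBc : ∀ z ∈ f^[m] '' A, deriv f z ≠ 0 := by
        rintro _ ⟨a, ha, rfl⟩
        exact hAc a ha m (Nat.lt_succ_self m)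
      calc Measure.map (f^[m+1]) ((ν.restrict A).withDensity
            (fun z => ∏ j ∈ Finset.range (m+1), g (f^[j] z)))
          = Measure.map f (Measure.map (f^[m])
              (((ν.restrict A).withDensity (fun z => ∏ j ∈ Finset.range m, g (f^[j] z))).withDensity
                (g ∘ f^[m]))) := by
            have hDens : (fun z => ∏ j ∈ Finset.range (m+1), g (f^[j] z)) =
                (fun z => ∏ j ∈ Finset.range m, g (f^[j] z)) * (g ∘ f^[m]) := by
              funext z; simp [Finset.prod_range_succ]
            rw [Measure.map_map hfm (hf.iterate m).continuous.measurable,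
              ← Function.iterate_succ' f m,
              ← withDensity_mul _ hDm (hgm.comp (hf.iterate m).continuous.measurable), hDens]
        _ = Measure.map f ((ν.restrict (f^[m] '' A)).withDensity g) := by
            rw [wdmap _ _ (hf.iterate m).continuous.measurable,
              ih A hA hinjm (fun z hz j hj => hAc z hz j (Nat.lt_succ_of_lt hj))]
        _ = ν.restrict (f '' (f^[m] '' A)) := step _ hBmeas hBinj hBc
        _ = ν.restrict (f^[m+1] '' A) := by
            rw [Function.iterate_succ' f m, Set.image_comp]
  -- derivative of iterate
  have hderiv : ∀ (m : ℕ) (z : ℂ), deriv (f^[m]) z = ∏ j ∈ Finset.range m, deriv f (f^[j] z) := by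
    intro m
    induction m with
    | zero => intro z; simp
    | succ m ih =>
      intro z
      rw [Function.iterate_succ' f m, Finset.prod_range_succ]
      have : deriv (f ∘ f^[m]) z = deriv f (f^[m] z) * deriv (f^[m]) z :=
        deriv_comp z (hf _) ((hf.iterate m) z)
      rw [this, ih z, mul_comm]
  -- evaluate key at U and univ
  have hkeyU := congrArg (fun μ : Measure ℂ => μ Set.univ)
    (key n U hU hinj (fun z hz j hj => hcrit z hz j hj))
  simp only [Measure.map_apply (hf.iterate n).continuous.measurable MeasurableSet.univ,
    Set.preimage_univ, Measure.restrict_apply_univ] at hkeyU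
  have hDmn : Measurable (fun z => ∏ j ∈ Finset.range n, g (f^[j] z)) :=
    Finset.measurable_prod _ fun j _ => hgm.comp (hf.iterate j).continuous.measurable
  rw [withDensity_apply _ MeasurableSet.univ, Measure.restrict_restrict MeasurableSet.univ,
    Set.univ_inter] at hkeyU
  -- so: ∫⁻ z in U, ∏ ... = ν (f^[n] '' U)
  set b : ℝ := ‖deriv (f^[n]) x‖ with hb
  have hbpos : 0 < b := by
    rw [hb, norm_pos_iff, hderiv n x]
    exact Finset.prod_ne_zero_iff.2 fun j hj => hcrit x hx j (Finset.mem_range.1 hj)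
  have hKpos : (0 : ℝ) < K := lt_of_lt_of_le one_pos hK
  set c : ℝ := Real.exp ((n : ℝ) * P) * (K ^ (-|t|) * b ^ t) with hc
  -- pointwise lower bound
  have hpt : ∀ z ∈ U, ENNReal.ofReal c ≤ ∏ j ∈ Finset.range n, g (f^[j] z) := by
    intro z hz
    have hprod : (∏ j ∈ Finset.range n, g (f^[j] z)) =
        ENNReal.ofReal (Real.exp ((n : ℝ) * P) * ‖deriv (f^[n]) z‖ ^ t) := by
      rw [hg]
      rw [← ENNReal.ofReal_prod_of_nonneg (fun j _ => (Real.exp_pos _).le)]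
      congr 1
      rw [← Real.exp_sum]
      have hlog : ∑ j ∈ Finset.range n, (P + t * Real.log ‖deriv f (f^[j] z)‖) =
          (n : ℝ) * P + t * Real.log ‖deriv (f^[n]) z‖ := by
        rw [Finset.sum_add_distrib, Finset.sum_const, Finset.card_range, nsmul_eq_mul,
          ← Finset.mul_sum]
        congr 2
        rw [hderiv n z, norm_prod, ← Real.log_prod]
        intro j hj
        exact norm_ne_zero_iff.2 (hcrit z hz j (Finset.mem_range.1 hj))
      rw [hlog, Real.exp_add]
      congr 1
      have hazpos : 0 < ‖deriv (f^[n]) z‖ := by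
        rw [norm_pos_iff, hderiv n z]
        exact Finset.prod_ne_zero_iff.2 fun j hj => hcrit z hz j (Finset.mem_range.1 hj)
      rw [Real.rpow_def_of_pos hazpos, mul_comm (Real.log _) t]
    rw [hprod]
    apply ENNReal.ofReal_le_ofReal
    rw [hc]
    apply mul_le_mul_of_nonneg_left _ (Real.exp_pos _).le
    -- K ^ (-|t|) * b ^ t ≤ ‖deriv (f^[n]) z‖ ^ t
    obtain ⟨hlo, hhi⟩ := hdist z hz
    have hazpos : 0 < ‖deriv (f^[n]) z‖ := lt_of_lt_of_le (by positivity) hlo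
    rcases le_or_gt 0 t with ht | ht
    · rw [abs_of_nonneg ht]
      calc K ^ (-t) * b ^ t = (K⁻¹ * b) ^ t := by
            rw [Real.mul_rpow (by positivity) hbpos.le, Real.inv_rpow hKpos.le,
              ← Real.rpow_neg hKpos.le]
        _ ≤ ‖deriv (f^[n]) z‖ ^ t := Real.rpow_le_rpow (by positivity) hlo ht
    · rw [abs_of_neg ht, neg_neg]
      calc K ^ t * b ^ t = (K * b) ^ t := (Real.mul_rpow hKpos.le hbpos.le).symm
        _ ≤ ‖deriv (f^[n]) z‖ ^ t := Real.rpow_le_rpow_of_nonpos hazpos hhi ht.le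
  -- integrate the bound
  have hlb : ENNReal.ofReal c * ν U ≤ ν (f^[n] '' U) := by
    rw [← hkeyU]
    calc ENNReal.ofReal c * ν U = ∫⁻ _ in U, ENNReal.ofReal c ∂ν := by
          rw [setLIntegral_const, mul_comm]
      _ ≤ ∫⁻ z in U, ∏ j ∈ Finset.range n, g (f^[j] z) ∂ν :=
          setLIntegral_mono hDmn hpt
  -- conclude
  have hcpos : 0 < c := by
    rw [hc]; positivity
  have hCc : ENNReal.ofReal (K ^ |t| * Real.exp (-(n : ℝ) * P) * b ^ (-t)) *
      ENNReal.ofReal c = 1 := by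
    rw [← ENNReal.ofReal_mul (by positivity), hc]
    rw [show K ^ |t| * Real.exp (-(n : ℝ) * P) * b ^ (-t) *
        (Real.exp ((n : ℝ) * P) * (K ^ (-|t|) * b ^ t)) =
        (K ^ |t| * K ^ (-|t|)) * (Real.exp (-(n : ℝ) * P) * Real.exp ((n : ℝ) * P)) *
        (b ^ (-t) * b ^ t) by ring]
    rw [← Real.rpow_add hKpos, ← Real.exp_add, ← Real.rpow_add hbpos]
    simp
  calc ν U = ENNReal.ofReal (K ^ |t| * Real.exp (-(n : ℝ) * P) * b ^ (-t)) *
        (ENNReal.ofReal c * ν U) := by rw [← mul_assoc, hCc, one_mul]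
    _ ≤ _ := mul_le_mul_right hlb _
end
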